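/- For all n ≥ 2, the designs X_n generated by the greedy-packing algorithm satisfy SR(X_n) ≥ (1/2)·SR*_n, where SR*_n = max over all n-point designs in X of their separation radius. -/

import Mathlib

open Metric Set MeasureTheory

/-- Distance from a point `x` to the nearest point of the design `D`. -/
noncomputable def minDist {E : Type*} [NormedAddCommGroup E] (D : Finset E) (x : E) : ℝ :=
  sInf ((fun p => dist x p) '' (D : Set E))

/-- Fill distance (covering radius) of the design `D` for the set `A`:
`CR_A(D) = sup_{x ∈ A} min_{p ∈ D} ‖x - p‖`. -/
noncomputable def fillDist {E : Type*} [NormedAddCommGroup E] (A : Set E) (D : Finset E) : ℝ :=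
  sSup ((fun x => minDist D x) '' A)

/-- Separation radius of the design `D`:
`SR(D) = (1/2) min_{p ≠ q ∈ D} ‖p - q‖`. -/
noncomputable def sepRad {E : Type*} [NormedAddCommGroup E] (D : Finset E) : ℝ :=
  (1 / 2) * sInf ((fun p : E × E => dist p.1 p.2) '' {p | p.1 ∈ D ∧ p.2 ∈ D ∧ p.1 ≠ p.2})

/-- Mesh-ratio of the design `D` for the set `A`: `MR(D) = CR_A(D) / SR(D)`. -/
noncomputable def meshRatio {E : Type*} [NormedAddCommGroup E] (A : Set E) (D : Finset E) : ℝ :=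
  fillDist A D / sepRad D

/-- The nested design consisting of the first `n` points of the sequence `x`. -/
noncomputable def design {E : Type*} (x : ℕ → E) (n : ℕ) : Finset E :=
  letI := Classical.decEq E
  (Finset.range n).image x


section aux
variable {E : Type*} [NormedAddCommGroup E]

lemma minDist_bddBelow (D : Finset E) (x : E) :
    BddBelow ((fun p => dist x p) '' (D : Set E)) :=
  ⟨0, by rintro r ⟨p, -, rfl⟩; exact dist_nonneg⟩

lemma minDist_le {D : Finset E} {p : E} (hp : p ∈ D) (x : E) :
    minDist D x ≤ dist x p :=
  csInf_le (minDist_bddBelow D x) ⟨p, hp, rfl⟩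

lemma minDist_anti {D D' : Finset E} (h : D ⊆ D') (hD : D.Nonempty) (x : E) :
    minDist D' x ≤ minDist D x :=
  csInf_le_csInf (minDist_bddBelow D' x) (hD.elim fun p hp => ⟨dist x p, p, hp, rfl⟩)
    (Set.image_mono (by exact_mod_cast h))

lemma exists_nearest {D : Finset E} (hD : D.Nonempty) (x : E) :
    ∃ p ∈ D, dist x p = minDist D x := by
  have hne : ((fun p => dist x p) '' (D : Set E)).Nonempty :=
    hD.elim fun p hp => ⟨dist x p, p, hp, rfl⟩
  have hfin : ((fun p => dist x p) '' (D : Set E)).Finite :=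
    (D.finite_toSet).image _
  obtain ⟨p, hp, hp2⟩ := hne.csInf_mem hfin
  exact ⟨p, hp, hp2⟩

lemma bddAbove_minDist_image {S : Set E} (hS : IsCompact S) {D : Finset E}
    (hD : D.Nonempty) : BddAbove ((fun x => minDist D x) '' S) := by
  obtain ⟨p0, hp0⟩ := hD
  obtain ⟨r, hr⟩ := hS.isBounded.subset_closedBall p0
  refine ⟨r, ?_⟩
  rintro _ ⟨y, hy, rfl⟩
  exact (minDist_le hp0 y).trans (by simpa [Metric.mem_closedBall] using hr hy)

lemma minDist_le_fillDist {S : Set E} (hS : IsCompact S) {D : Finset E}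
    (hD : D.Nonempty) {y : E} (hy : y ∈ S) : minDist D y ≤ fillDist S D :=
  le_csSup (bddAbove_minDist_image hS hD) ⟨y, hy, rfl⟩

lemma fillDist_anti {S : Set E} (hS : IsCompact S) (hSne : S.Nonempty)
    {D D' : Finset E} (h : D ⊆ D') (hD : D.Nonempty) :
    fillDist S D' ≤ fillDist S D := by
  apply csSup_le (hSne.image _)
  rintro _ ⟨y, hy, rfl⟩
  exact (minDist_anti h hD y).trans (minDist_le_fillDist hS hD hy)

lemma mem_design {x : ℕ → E} {k : ℕ} {p : E} :
    p ∈ design x k ↔ ∃ i < k, x i = p := by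
  classical
  simp [design, Finset.mem_image, Finset.mem_range]

lemma design_mono (x : ℕ → E) {j k : ℕ} (h : j ≤ k) : design x j ⊆ design x k := by
  intro p hp
  rw [mem_design] at hp ⊢
  obtain ⟨i, hi, rfl⟩ := hp
  exact ⟨i, by omega, rfl⟩

lemma design_card_le (x : ℕ → E) (k : ℕ) : (design x k).card ≤ k := by
  classical
  simpa [design] using (Finset.card_image_le).trans (le_of_eq (Finset.card_range k))

lemma design_nonempty (x : ℕ → E) {k : ℕ} (hk : 1 ≤ k) : (design x k).Nonempty :=
  ⟨x 0, mem_design.mpr ⟨0, by omega, rfl⟩⟩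

end aux

/-- For all `n ≥ 2`, the designs `Xₙ` generated by the greedy-packing
algorithm satisfy `SR(Xₙ) ≥ (1/2)·SR*ₙ`, where `SR*ₙ` is the maximal separation radius over
all `n`-point designs in `S` (expressed as: `(1/2)·SR(D') ≤ SR(Xₙ)` for every `n`-point
design `D'`). -/
theorem statement7 {d : ℕ} (hd : 1 ≤ d)
    {E : Type*} [NormedAddCommGroup E] [NormedSpace ℝ E] [FiniteDimensional ℝ E]
    (hdim : Module.finrank ℝ E = d)
    (S : Set E) (hS : IsCompact S)
    (x : ℕ → E) (hinj : Function.Injective x) (hx0 : x 0 ∈ S)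
    (hgreedy : ∀ k : ℕ, 1 ≤ k →
      x k ∈ S ∧ minDist (design x k) (x k) = fillDist S (design x k))
    (n : ℕ) (hn : 2 ≤ n) :
    ∀ D' : Finset E, ↑D' ⊆ S → D'.card = n → (1 / 2) * sepRad D' ≤ sepRad (design x n) := by
  classical
  intro D' hD'S hD'card
  set m := n - 1 with hm
  have hm1 : 1 ≤ m := by omega
  have hmn : m ≤ n := by omega
  have hDm_ne : (design x m).Nonempty := design_nonempty x hm1
  set c := fillDist S (design x m) with hc
  have hSne : S.Nonempty := ⟨x 0, hx0⟩
  -- key inequality for pairs in the greedy design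
  have key1 : ∀ i j : ℕ, i < j → j < n → c ≤ dist (x i) (x j) := by
    intro i j hij hjn
    have hj1 : 1 ≤ j := by omega
    have hjm : j ≤ m := by omega
    have hDj_ne : (design x j).Nonempty := design_nonempty x hj1
    have h1 : minDist (design x j) (x j) ≤ dist (x j) (x i) :=
      minDist_le (mem_design.mpr ⟨i, hij, rfl⟩) _
    have h2 := (hgreedy j hj1).2
    have h3 : c ≤ fillDist S (design x j) :=
      fillDist_anti hS hSne (design_mono x hjm) hDj_ne
    calc c ≤ fillDist S (design x j) := h3
      _ = minDist (design x j) (x j) := h2.symm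
      _ ≤ dist (x j) (x i) := h1
      _ = dist (x i) (x j) := dist_comm _ _
  -- c ≤ 2 * sepRad (design x n)
  have key1' : c ≤ sInf ((fun p : E × E => dist p.1 p.2) ''
      {p | p.1 ∈ design x n ∧ p.2 ∈ design x n ∧ p.1 ≠ p.2}) := by
    apply le_csInf
    · refine ⟨dist (x 0) (x 1), ⟨(x 0, x 1),
        ⟨mem_design.mpr ⟨0, by omega, rfl⟩, mem_design.mpr ⟨1, by omega, rfl⟩, ?_⟩, rfl⟩⟩
      intro h
      exact absurd (hinj h) (by omega)
    rintro r ⟨⟨p, q⟩, ⟨hp, hq, hne⟩, rfl⟩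
    obtain ⟨i, hi, rfl⟩ := mem_design.mp hp
    obtain ⟨j, hj, rfl⟩ := mem_design.mp hq
    have hij : i ≠ j := fun h => hne (by rw [h])
    rcases lt_or_gt_of_ne hij with h | h
    · exact key1 i j h hj
    · simpa [dist_comm] using key1 j i h hi
  -- pigeonhole: two points of D' are close
  have hcard : (design x m).card < D'.card := by
    have := design_card_le x m
    omega
  have hmaps : ∀ p ∈ D', (exists_nearest hDm_ne p).choose ∈ design x m :=
    fun p _ => (exists_nearest hDm_ne p).choose_spec.1
  obtain ⟨p, hp, q, hq, hpq, hfeq⟩ :=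
    Finset.exists_ne_map_eq_of_card_lt_of_maps_to hcard hmaps
  have hdp : dist p (exists_nearest hDm_ne p).choose ≤ c := by
    rw [(exists_nearest hDm_ne p).choose_spec.2]
    exact minDist_le_fillDist hS hDm_ne (hD'S hp)
  have hdq : dist q (exists_nearest hDm_ne q).choose ≤ c := by
    rw [(exists_nearest hDm_ne q).choose_spec.2]
    exact minDist_le_fillDist hS hDm_ne (hD'S hq)
  have hpqle : dist p q ≤ 2 * c := by
    have htri := dist_triangle p (exists_nearest hDm_ne p).choose q
    rw [hfeq] at htri hdp
    have hdc := dist_comm (exists_nearest hDm_ne q).choose q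
    linarith
  have hsepD' : sInf ((fun p : E × E => dist p.1 p.2) ''
      {r | r.1 ∈ D' ∧ r.2 ∈ D' ∧ r.1 ≠ r.2}) ≤ dist p q := by
    apply csInf_le
    · exact ⟨0, by rintro r ⟨⟨a, b⟩, -, rfl⟩; exact dist_nonneg⟩
    · exact ⟨(p, q), ⟨hp, hq, hpq⟩, rfl⟩
  rw [sepRad, sepRad]
  nlinarith [key1', hsepD', hpqle]
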